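/- Let P be a CPOS polygon, let i be an index, and let α > 0 with α ≠ 1 be such that P_{i+1} − P_i = −α(P_{i+n+1} − P_{i+n}) and P_{i+n} − P_{i+n−1} = −α(P_i − P_{i−1}). Let M_i := (P_i + P_{i+n})/2, let D(i−1/2) be the intersection point of the great diagonals d_{i−1} and d_i, and let D(i+1/2) be the intersection point of d_i and d_{i+1}. Then, with λ := (α − 1)/(2(1 + α)), one has D(i+1/2) = M_i + λ(P_{i+n} − P_i) and D(i−1/2) = M_i − λ(P_{i+n} − P_i). In particular M_i is the midpoint of the segment D(i−1/2)D(i+1/2). -/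
import Mathlib


open scoped BigOperators Classical

/-- `det2 v w` is the determinant of the 2×2 matrix with columns `v, w ∈ ℝ²`. -/
noncomputable def det2 (v w : ℝ × ℝ) : ℝ := v.1 * w.2 - v.2 * w.1

/-- A convex polygon with parallel opposite sides (CPOS polygon): vertices `P i`, `i : ℤ`,
periodic with period `2n`; the side vectors `e(i+1/2) = P(i+1) - P i` satisfy
`e(i+n+1/2) ∥ e(i+1/2)`, no two adjacent sides are parallel, and the polygon is
positively oriented: `[e(i+1/2), e(j+1/2)] > 0` for `1 ≤ i < j ≤ n`. -/
structure CPOS (n : ℕ) : Type where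
  P : ℤ → ℝ × ℝ
  hn : 2 ≤ n
  periodic : ∀ i : ℤ, P (i + 2 * (n : ℤ)) = P i
  parallel : ∀ i : ℤ, ∃ t : ℝ, P (i + (n : ℤ) + 1) - P (i + (n : ℤ)) = t • (P (i + 1) - P i)
  adj_not_parallel : ∀ i : ℤ, det2 (P (i + 1) - P i) (P (i + 2) - P (i + 1)) ≠ 0
  oriented : ∀ i j : ℤ, 1 ≤ i → i < j → j ≤ (n : ℤ) →
    0 < det2 (P (i + 1) - P i) (P (j + 1) - P j)

/-- `onDiag P n i x` : the point `x` lies on the great diagonal `d_i`,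
the line through `P i` and `P (i+n)`. -/
def onDiag (P : ℤ → ℝ × ℝ) (n : ℕ) (i : ℤ) (x : ℝ × ℝ) : Prop :=
  ∃ t : ℝ, x = P i + t • (P (i + (n : ℤ)) - P i)

/-- Let `P` be a CPOS polygon, `i` an index, and `α > 0`, `α ≠ 1`, with
`P_{i+1} - P_i = -α(P_{i+n+1} - P_{i+n})` and `P_{i+n} - P_{i+n-1} = -α(P_i - P_{i-1})`.
Let `M_i = (P_i + P_{i+n})/2`, and let `D(i-1/2)`, `D(i+1/2)` be the (unique) intersection
points of `d_{i-1}, d_i` and of `d_i, d_{i+1}`. Then, with `λ = (α-1)/(2(1+α))`,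
`D(i+1/2) = M_i + λ(P_{i+n} - P_i)` and `D(i-1/2) = M_i - λ(P_{i+n} - P_i)`;
in particular `M_i` is the midpoint of `D(i-1/2)D(i+1/2)`. -/
theorem statement7 {n : ℕ} (C : CPOS n) (i : ℤ) (α : ℝ) (hα : 0 < α) (hα1 : α ≠ 1)
    (h1 : C.P (i + 1) - C.P i = -(α • (C.P (i + (n : ℤ) + 1) - C.P (i + (n : ℤ)))))
    (h2 : C.P (i + (n : ℤ)) - C.P (i + (n : ℤ) - 1) = -(α • (C.P i - C.P (i - 1))))
    (Dm Dp : ℝ × ℝ)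
    (hDm : onDiag C.P n (i - 1) Dm ∧ onDiag C.P n i Dm)
    (hDmu : ∀ x : ℝ × ℝ, onDiag C.P n (i - 1) x ∧ onDiag C.P n i x → x = Dm)
    (hDp : onDiag C.P n i Dp ∧ onDiag C.P n (i + 1) Dp)
    (hDpu : ∀ x : ℝ × ℝ, onDiag C.P n i x ∧ onDiag C.P n (i + 1) x → x = Dp) :
    Dp = (1 / 2 : ℝ) • (C.P i + C.P (i + (n : ℤ)))
        + ((α - 1) / (2 * (1 + α))) • (C.P (i + (n : ℤ)) - C.P i) ∧
    Dm = (1 / 2 : ℝ) • (C.P i + C.P (i + (n : ℤ)))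
        - ((α - 1) / (2 * (1 + α))) • (C.P (i + (n : ℤ)) - C.P i) ∧
    (1 / 2 : ℝ) • (C.P i + C.P (i + (n : ℤ))) = (1 / 2 : ℝ) • (Dm + Dp) := by
  have hs : (1 : ℝ) + α ≠ 0 := by linarith
  have h2s : (2 : ℝ) + α * 2 ≠ 0 := by linarith
  have hinv : (2 + α * 2) * (2 + α * 2)⁻¹ = 1 := mul_inv_cancel₀ h2s
  set A := C.P i with hA
  set B := C.P (i + (n : ℤ)) with hB
  set lam : ℝ := (α - 1) / (2 * (1 + α)) with hlam
  set Xp : ℝ × ℝ := (1 / 2 : ℝ) • (A + B) + lam • (B - A) with hXp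
  set Xm : ℝ × ℝ := (1 / 2 : ℝ) • (A + B) - lam • (B - A) with hXm
  have hQ : C.P (i + 1) = A - α • (C.P (i + (n : ℤ) + 1) - B) := by
    have h := sub_eq_iff_eq_add.mp h1
    rw [h]; module
  have hT : C.P (i + (n : ℤ) - 1) = B + α • (A - C.P (i - 1)) := by
    have h := sub_eq_iff_eq_add.mp h2
    have h' : C.P (i + (n : ℤ) - 1) = B + α • (A - C.P (i - 1)) := by
      rw [h]; module
    exact h'
  have hXpOn : onDiag C.P n i Xp ∧ onDiag C.P n (i + 1) Xp := by
    constructor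
    · exact ⟨1 / 2 + lam, by rw [hXp]; module⟩
    · refine ⟨α / (1 + α), ?_⟩
      have e1 : C.P (i + 1 + (n : ℤ)) = C.P (i + (n : ℤ) + 1) := congrArg C.P (by ring)
      rw [e1, hQ, hXp]
      match_scalars <;>
        first
          | ring1
          | (rw [hlam]; field_simp [hs, h2s]; ring1)
          | (rw [hlam]; field_simp [hs, h2s])
          | (field_simp [hs, h2s]; ring1)
          | (field_simp [hs, h2s])
          | linear_combination (α - 1) * hinv
          | linear_combination (1 - α) * hinv
  have hXmOn : onDiag C.P n (i - 1) Xm ∧ onDiag C.P n i Xm := by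
    constructor
    · refine ⟨1 / (1 + α), ?_⟩
      have e1 : C.P (i - 1 + (n : ℤ)) = C.P (i + (n : ℤ) - 1) := congrArg C.P (by ring)
      rw [e1, hT, hXm]
      match_scalars <;>
        first
          | ring1
          | (rw [hlam]; field_simp [hs, h2s]; ring1)
          | (rw [hlam]; field_simp [hs, h2s])
          | (field_simp [hs, h2s]; ring1)
          | (field_simp [hs, h2s])
          | linear_combination (α - 1) * hinv
          | linear_combination (1 - α) * hinv
    · exact ⟨1 / 2 - lam, by rw [hXm]; module⟩
  have hp : Xp = Dp := hDpu Xp hXpOn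
  have hm : Xm = Dm := hDmu Xm hXmOn
  refine ⟨hp.symm, hm.symm, ?_⟩
  rw [← hp, ← hm, hXp, hXm]; module
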